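/- Let A be a ∗-ring with h⁻(A) = 0. Let μ₁,…,μₙ ∈ A be self-dual elements and λ₁,…,λ_m ∈ A be such that μ₁,…,μₙ, λ₁, λ₁∗,…,λ_m, λ_m∗ is an A-regular sequence. Then the following are equivalent: (1) the sequence [μ₁],…,[μₙ], [λ₁λ₁∗],…,[λ_mλ_m∗] is a regular sequence in h⁺(A); (2) h⁻(A/(μ₁,…,μ_k)) = 0 for all 1 ≤ k ≤ n and h⁻(A/(μ₁,…,μₙ, λ₁, λ₁∗,…,λ_j, λ_j∗)) = 0 for all 1 ≤ j ≤ m. If these equivalent conditions hold, then h⁺(A/(μ₁,…,μₙ, λ₁, λ₁∗,…,λ_m, λ_m∗)) ≅ h⁺(A)/([μ₁],…,[μₙ],[λ₁λ₁∗],…,[λ_mλ_m∗]) and h⁻ of this quotient ring vanishes. -/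

import Mathlib

/-- A sequence (given as a list) `a₁, …, aₙ` in a commutative ring `A` is `A`-regular if for
each `i`, `aᵢ` is not a zero divisor on `A ⧸ (a₁, …, a_{i-1})`. -/
def IsRegularSeq {A : Type*} [CommRing A] (l : List A) : Prop :=
  ∀ (i : ℕ) (h : i < l.length), ∀ x : A,
    l.get ⟨i, h⟩ * x ∈ Ideal.span {y | y ∈ l.take i} →
      x ∈ Ideal.span {y | y ∈ l.take i}

/-- For a list `s` of (self-dual) elements of a ∗-ring `A`, `hSpanMem s y` says that the
class `[y]` of a self-dual element `y` lies in the ideal of `h⁺(A)` generated by the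
classes of the entries of `s`: `y = Σ cᵢ·sᵢ + (t + t∗)` with all `cᵢ` self-dual. -/
def hSpanMem {A : Type*} [CommRing A] [StarRing A] (s : List A) (y : A) : Prop :=
  ∃ c : Fin s.length → A, (∀ i, star (c i) = c i) ∧
    ∃ t : A, y = (∑ i, c i * s.get i) + (t + star t)

/-- `IsHPlusRegularSeq s` says that the classes in `h⁺(A)` of the (self-dual) entries of
`s` form a regular sequence in the ring `h⁺(A)`: for each `i`, `[sᵢ]` is not a zero
divisor on `h⁺(A) ⧸ ([s₁], …, [s_{i-1}])`. -/
def IsHPlusRegularSeq {A : Type*} [CommRing A] [StarRing A] (s : List A) : Prop :=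
  ∀ (i : ℕ) (h : i < s.length), ∀ y : A, star y = y →
    hSpanMem (s.take i) (y * s.get ⟨i, h⟩) → hSpanMem (s.take i) y

/-- `HMinusModZero I` says that `h⁻(A/I) = 0` (for a ∗-closed ideal `I`): every element of
`A/I` killed by `id + ∗` is in the image of `id − ∗`. -/
def HMinusModZero {A : Type*} [CommRing A] [StarRing A] (I : Ideal A) : Prop :=
  ∀ a : A, star a + a ∈ I → ∃ b : A, a - (b - star b) ∈ I

set_option linter.unusedSectionVars false

namespace Cor

variable {A : Type*} [CommRing A] [StarRing A]

def SC (I : Ideal A) : Prop := ∀ x ∈ I, star x ∈ I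

def SurjP (I : Ideal A) : Prop := ∀ a : A, star a - a ∈ I → ∃ x, star x = x ∧ a - x ∈ I

def InvP (s : List A) (I : Ideal A) : Prop :=
  ∀ y : A, star y = y → (∃ b, y - (b + star b) ∈ I) → hSpanMem s y

def RegMod (I : Ideal A) (a : A) : Prop := ∀ x, a * x ∈ I → x ∈ I

lemma RegMod.star_reg {I : Ideal A} {a : A} (hSC : SC I) (h : RegMod I a) :
    RegMod I (star a) := by
  intro x hx
  have h1 : star (star a * x) ∈ I := hSC _ hx
  rw [star_mul, star_star, mul_comm] at h1
  have h2 := h _ h1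
  simpa using hSC _ h2

lemma RegMod.mul {I : Ideal A} {a b : A} (ha : RegMod I a) (hb : RegMod I b) :
    RegMod I (a * b) := by
  intro x hx
  rw [mul_assoc] at hx
  exact hb _ (ha _ hx)

lemma mem_sup_singleton {I : Ideal A} {a x : A} :
    x ∈ I ⊔ Ideal.span {a} ↔ ∃ c, x - c * a ∈ I := by
  constructor
  · intro h
    obtain ⟨y, hy, z, hz, hyz⟩ := Submodule.mem_sup.mp h
    obtain ⟨c, rfl⟩ := Ideal.mem_span_singleton'.mp hz
    exact ⟨c, by rw [← hyz]; simpa using hy⟩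
  · rintro ⟨c, hc⟩
    have : x = (x - c * a) + c * a := by ring
    rw [this]
    exact Submodule.add_mem_sup hc (Ideal.mem_span_singleton'.mpr ⟨c, rfl⟩)

lemma mem_sup_pair {I : Ideal A} {a b x : A} :
    x ∈ I ⊔ Ideal.span {a, b} ↔ ∃ c d, x - c * a - d * b ∈ I := by
  constructor
  · intro h
    obtain ⟨y, hy, z, hz, hyz⟩ := Submodule.mem_sup.mp h
    obtain ⟨c, w, hw, hzw⟩ := Ideal.mem_span_insert.mp hz
    obtain ⟨d, rfl⟩ := Ideal.mem_span_singleton'.mp hw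
    refine ⟨c, d, ?_⟩
    have : x - c * a - d * b = y := by rw [← hyz, hzw]; ring
    rwa [this]
  · rintro ⟨c, d, h⟩
    have : x = (x - c * a - d * b) + (c * a + d * b) := by ring
    rw [this]
    refine Submodule.add_mem_sup h ?_
    exact Ideal.add_mem _ (Ideal.mem_span_insert.mpr ⟨c, 0, Ideal.zero_mem _, by ring⟩)
      (Ideal.mem_span_insert.mpr ⟨0, d * b, Ideal.mem_span_singleton'.mpr ⟨d, rfl⟩, by ring⟩)

def hS' (s : List A) (y : A) : Prop :=
  ∃ c : ℕ → A, (∀ i, star (c i) = c i) ∧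
    ∃ t : A, y = (∑ i ∈ Finset.range s.length, c i * s.getD i 0) + (t + star t)

lemma hSpanMem_iff {s : List A} {y : A} : hSpanMem s y ↔ hS' s y := by
  constructor
  · rintro ⟨c, hc, t, ht⟩
    refine ⟨fun i => if h : i < s.length then c ⟨i, h⟩ else 0, ?_, t, ?_⟩
    · intro i; by_cases h : i < s.length <;> simp [h, hc]
    · rw [ht]
      congr 1
      rw [← Fin.sum_univ_eq_sum_range]
      apply Finset.sum_congr rfl
      intro i _
      simp [i.isLt, List.getD_eq_getElem]
  · rintro ⟨c, hc, t, ht⟩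
    refine ⟨fun i => c i, fun i => hc i, t, ?_⟩
    rw [ht]
    congr 1
    rw [← Fin.sum_univ_eq_sum_range]
    apply Finset.sum_congr rfl
    intro i _
    simp [List.getD_eq_getElem]

lemma hSpanMem_nil {y : A} : hSpanMem ([] : List A) y ↔ ∃ t, y = t + star t := by
  constructor
  · rintro ⟨c, hc, t, ht⟩
    exact ⟨t, by simpa using ht⟩
  · rintro ⟨t, ht⟩
    exact ⟨Fin.elim0, fun i => i.elim0, t, by simpa using ht⟩

lemma hSpanMem_snoc {s : List A} {h y : A} :
    hSpanMem (s ++ [h]) y ↔ ∃ x, star x = x ∧ ∃ y', hSpanMem s y' ∧ y = y' + x * h := by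
  rw [hSpanMem_iff]
  constructor
  · rintro ⟨c, hc, t, ht⟩
    refine ⟨c s.length, hc _, (∑ i ∈ Finset.range s.length, c i * s.getD i 0) + (t + star t),
      hSpanMem_iff.mpr ⟨c, hc, t, rfl⟩, ?_⟩
    rw [ht]
    have hlen : (s ++ [h]).length = s.length + 1 := by simp
    rw [hlen, Finset.sum_range_succ]
    have h1 : ∀ i ∈ Finset.range s.length, c i * (s ++ [h]).getD i 0 = c i * s.getD i 0 := by
      intro i hi
      rw [Finset.mem_range] at hi
      congr 1
      rw [List.getD_eq_getElem _ _ (by simp; omega), List.getD_eq_getElem _ _ hi,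
        List.getElem_append_left hi]
    rw [Finset.sum_congr rfl h1]
    have h2 : (s ++ [h]).getD s.length 0 = h := by
      rw [List.getD_eq_getElem _ _ (by simp), List.getElem_append_right (le_refl _)]
      simp
    rw [h2]; ring
  · rintro ⟨x, hx, y', hy', hyy⟩
    obtain ⟨c, hc, t, ht⟩ := hSpanMem_iff.mp hy'
    refine ⟨fun i => if i < s.length then c i else x, ?_, t, ?_⟩
    · intro i; by_cases hi : i < s.length <;> simp [hi, hc, hx]
    · have hlen : (s ++ [h]).length = s.length + 1 := by simp
      rw [hlen, Finset.sum_range_succ, hyy, ht]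
      have h1 : ∀ i ∈ Finset.range s.length,
          (if i < s.length then c i else x) * (s ++ [h]).getD i 0 = c i * s.getD i 0 := by
        intro i hi
        rw [Finset.mem_range] at hi
        rw [if_pos hi]
        congr 1
        rw [List.getD_eq_getElem _ _ (by simp; omega), List.getD_eq_getElem _ _ hi,
          List.getElem_append_left hi]
      rw [Finset.sum_congr rfl h1]
      have h2 : (s ++ [h]).getD s.length 0 = h := by
        rw [List.getD_eq_getElem _ _ (by simp), List.getElem_append_right (le_refl _)]
        simp
      rw [h2]
      simp only [lt_irrefl, if_false]
      ring

lemma hSpanMem.sub_mem {s : List A} {y : A} {I : Ideal A} (hsI : ∀ z ∈ s, z ∈ I)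
    (hy : hSpanMem s y) : ∃ t, y - (t + star t) ∈ I := by
  obtain ⟨c, hc, t, ht⟩ := hy
  refine ⟨t, ?_⟩
  have : y - (t + star t) = ∑ i, c i * s.get i := by rw [ht]; ring
  rw [this]
  exact Ideal.sum_mem _ fun i _ => Ideal.mul_mem_left _ _ (hsI _ (by simp [List.get_eq_getElem]))


section Steps

variable {I : Ideal A} {s : List A}

/-! ### μ-step lemmas -/

lemma surj_mu {μ : A} (hSC : SC I) (hμsd : star μ = μ) (hμreg : RegMod I μ)
    (hHM : HMinusModZero I) (hS : SurjP I) : SurjP (I ⊔ Ideal.span {μ}) := by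
  intro a ha
  obtain ⟨c, hc⟩ := mem_sup_singleton.mp ha
  have hcs : a - star a - star c * μ ∈ I := by
    have h := hSC _ hc
    have e : star (star a - a - c * μ) = a - star a - star c * μ := by
      simp only [star_sub, star_mul, star_star, hμsd]; ring
    rwa [e] at h
  have h2 : μ * (star c + c) ∈ I := by
    have e : μ * (star c + c) = -((star a - a - c * μ) + (a - star a - star c * μ)) := by ring
    rw [e]; exact neg_mem (add_mem hc hcs)
  obtain ⟨d, hd⟩ := hHM c (hμreg _ h2)
  have hx0 : star (a + d * μ) - (a + d * μ) ∈ I := by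
    have e : star (a + d * μ) - (a + d * μ)
        = (star a - a - c * μ) + (c - (d - star d)) * μ := by
      simp only [star_add, star_mul, star_star, hμsd]; ring
    rw [e]; exact add_mem hc (Ideal.mul_mem_right _ _ hd)
  obtain ⟨x, hx, hxx⟩ := hS _ hx0
  refine ⟨x, hx, mem_sup_singleton.mpr ⟨-d, ?_⟩⟩
  have e : a - x - (-d) * μ = (a + d * μ) - x := by ring
  rw [e]; exact hxx

lemma inv_mu {μ : A} (hSC : SC I) (hμsd : star μ = μ) (hμreg : RegMod I μ)
    (hS : SurjP I) (hInv : InvP s I) :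
    InvP (s ++ [μ]) (I ⊔ Ideal.span {μ}) := by
  rintro y hy ⟨b, hb⟩
  obtain ⟨c, hc⟩ := mem_sup_singleton.mp hb
  have hcs : y - (star b + b) - star c * μ ∈ I := by
    have h := hSC _ hc
    have e : star (y - (b + star b) - c * μ) = y - (star b + b) - star c * μ := by
      simp only [star_sub, star_add, star_mul, star_star, hμsd, hy]; ring
    rwa [e] at h
  have h2 : μ * (star c - c) ∈ I := by
    have e : μ * (star c - c)
        = (y - (b + star b) - c * μ) - (y - (star b + b) - star c * μ) := by ring
    rw [e]; exact sub_mem hc hcs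
  obtain ⟨x, hx, hcx⟩ := hS c (hμreg _ h2)
  have hkey : (y - x * μ) - (b + star b) ∈ I := by
    have e : (y - x * μ) - (b + star b)
        = (y - (b + star b) - c * μ) + (c - x) * μ := by ring
    rw [e]; exact add_mem hc (Ideal.mul_mem_right _ _ hcx)
  have hsd : star (y - x * μ) = y - x * μ := by
    simp only [star_sub, star_mul, hμsd, hx, hy]; ring
  exact hSpanMem_snoc.mpr ⟨x, hx, y - x * μ, hInv _ hsd ⟨b, hkey⟩, by ring⟩

lemma hm_mu {μ : A} (hSC : SC I) (hsI : ∀ z ∈ s, z ∈ I) (hμsd : star μ = μ)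
    (hμreg : RegMod I μ) (hHM : HMinusModZero I) (hS : SurjP I) (hInv : InvP s I)
    (Hstep : ∀ y : A, star y = y → hSpanMem s (y * μ) → hSpanMem s y) :
    HMinusModZero (I ⊔ Ideal.span {μ}) := by
  intro a ha
  obtain ⟨c, hc⟩ := mem_sup_singleton.mp ha
  have hcs : a + star a - star c * μ ∈ I := by
    have h := hSC _ hc
    have e : star (star a + a - c * μ) = a + star a - star c * μ := by
      simp only [star_sub, star_add, star_mul, star_star, hμsd]; ring
    rwa [e] at h
  have h2 : μ * (star c - c) ∈ I := by
    have e : μ * (star c - c)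
        = (star a + a - c * μ) - (a + star a - star c * μ) := by ring
    rw [e]; exact sub_mem hc hcs
  obtain ⟨x, hx, hcx⟩ := hS c (hμreg _ h2)
  have hkey : x * μ - (a + star a) ∈ I := by
    have e : x * μ - (a + star a) = -((star a + a - c * μ) + (c - x) * μ) := by ring
    rw [e]; exact neg_mem (add_mem hc (Ideal.mul_mem_right _ _ hcx))
  have hsd : star (x * μ) = x * μ := by
    simp only [star_mul, hμsd, hx]; ring
  have hsx := Hstep x hx (hInv _ hsd ⟨a, hkey⟩)
  obtain ⟨t, ht⟩ := hSpanMem.sub_mem hsI hsx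
  have h5 : star (a - t * μ) + (a - t * μ) ∈ I := by
    have e : star (a - t * μ) + (a - t * μ)
        = ((star a + a - c * μ) + (c - x) * μ) + (x - (t + star t)) * μ := by
      simp only [star_sub, star_add, star_mul, star_star, hμsd]; ring
    rw [e]
    exact add_mem (add_mem hc (Ideal.mul_mem_right _ _ hcx)) (Ideal.mul_mem_right _ _ ht)
  obtain ⟨b, hb⟩ := hHM _ h5
  refine ⟨b, mem_sup_singleton.mpr ⟨t, ?_⟩⟩
  have e : a - (b - star b) - t * μ = (a - t * μ) - (b - star b) := by ring
  rw [e]; exact hb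

lemma hreg_mu {μ : A} (hSC : SC I) (hsI : ∀ z ∈ s, z ∈ I) (hμsd : star μ = μ)
    (hμreg : RegMod I μ) (hInv : InvP s I)
    (hHMnew : HMinusModZero (I ⊔ Ideal.span {μ})) :
    ∀ y : A, star y = y → hSpanMem s (y * μ) → hSpanMem s y := by
  intro y hy hsm
  obtain ⟨t, ht⟩ := hSpanMem.sub_mem hsI hsm
  have h1 : star t + t ∈ I ⊔ Ideal.span {μ} := by
    have e : star t + t = -(y * μ - (t + star t)) + y * μ := by ring
    rw [e]
    exact add_mem (Ideal.mem_sup_left (neg_mem ht))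
      (Ideal.mem_sup_right (Ideal.mem_span_singleton'.mpr ⟨y, rfl⟩))
  obtain ⟨b, hb⟩ := hHMnew t h1
  obtain ⟨c, hc⟩ := mem_sup_singleton.mp hb
  have hcs : star t + (b - star b) - star c * μ ∈ I := by
    have h := hSC _ hc
    have e : star (t - (b - star b) - c * μ) = star t + (b - star b) - star c * μ := by
      simp only [star_sub, star_mul, star_star, hμsd]; ring
    rwa [e] at h
  have h2 : μ * (y - (c + star c)) ∈ I := by
    have e : μ * (y - (c + star c))
        = (y * μ - (t + star t)) + (t - (b - star b) - c * μ)
          + (star t + (b - star b) - star c * μ) := by ring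
    rw [e]; exact add_mem (add_mem ht hc) hcs
  exact hInv y hy ⟨c, hμreg _ h2⟩

end Steps

section LamSteps

variable {I : Ideal A} {s : List A}

lemma surj_lam {l : A} (hSC : SC I) (hr1 : RegMod I l)
    (hr2 : RegMod (I ⊔ Ideal.span {l}) (star l))
    (hHM : HMinusModZero I) (hS : SurjP I) :
    SurjP (I ⊔ Ideal.span {l, star l}) := by
  intro a ha
  obtain ⟨c, d, h1⟩ := mem_sup_pair.mp ha
  have h1s : a - star a - star c * star l - star d * l ∈ I := by
    have h := hSC _ h1
    have e : star (star a - a - c * l - d * star l)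
        = a - star a - star c * star l - star d * l := by
      simp only [star_sub, star_mul, star_star]; ring
    rwa [e] at h
  have h7 : (c + star d) * l + (d + star c) * star l ∈ I := by
    have e : (c + star d) * l + (d + star c) * star l
        = -((star a - a - c * l - d * star l) + (a - star a - star c * star l - star d * l)) := by
      ring
    rw [e]; exact neg_mem (add_mem h1 h1s)
  have h2ex : star l * (d + star c) ∈ I ⊔ Ideal.span {l} := by
    refine mem_sup_singleton.mpr ⟨-(c + star d), ?_⟩
    have e : star l * (d + star c) - -(c + star d) * l
        = (c + star d) * l + (d + star c) * star l := by ring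
    rw [e]; exact h7
  obtain ⟨e, h2⟩ := mem_sup_singleton.mp (hr2 _ h2ex)
  have h8 : c + star d + e * star l ∈ I := by
    refine hr1 _ ?_
    have he : l * (c + star d + e * star l)
        = ((c + star d) * l + (d + star c) * star l) - (d + star c - e * l) * star l := by ring
    rw [he]; exact sub_mem h7 (Ideal.mul_mem_right _ _ h2)
  have h8s : star c + d + star e * l ∈ I := by
    have h := hSC _ h8
    have e2 : star (c + star d + e * star l) = star c + d + star e * l := by
      simp only [star_add, star_mul, star_star]; ring
    rwa [e2] at h
  have h9 : e + star e ∈ I := by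
    refine hr1 _ ?_
    have he : l * (e + star e) = (star c + d + star e * l) - (d + star c - e * l) := by ring
    rw [he]; exact sub_mem h8s h2
  obtain ⟨f, hf⟩ := hHM e (by rwa [add_comm])
  have hx0 : star (a + (c * l + f * (l * star l))) - (a + (c * l + f * (l * star l))) ∈ I := by
    have e2 : star (a + (c * l + f * (l * star l))) - (a + (c * l + f * (l * star l)))
        = (star a - a - c * l - d * star l) + (d + star c - e * l) * star l
          + (e - (f - star f)) * (l * star l) := by
      simp only [star_add, star_mul, star_star]; ring
    rw [e2]
    exact add_mem (add_mem h1 (Ideal.mul_mem_right _ _ h2)) (Ideal.mul_mem_right _ _ hf)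
  obtain ⟨x, hx, hxx⟩ := hS _ hx0
  refine ⟨x, hx, mem_sup_pair.mpr ⟨-c, -(f * l), ?_⟩⟩
  have e2 : a - x - (-c) * l - (-(f * l)) * star l = (a + (c * l + f * (l * star l))) - x := by
    ring
  rw [e2]; exact hxx

lemma inv_lam {l : A} (hSC : SC I) (hr1 : RegMod I l)
    (hr2 : RegMod (I ⊔ Ideal.span {l}) (star l))
    (hS : SurjP I) (hInv : InvP s I) :
    InvP (s ++ [l * star l]) (I ⊔ Ideal.span {l, star l}) := by
  rintro y hy ⟨b, hb⟩
  obtain ⟨c, d, h0⟩ := mem_sup_pair.mp hb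
  have h0s : y - (star b + b) - star c * star l - star d * l ∈ I := by
    have h := hSC _ h0
    have e : star (y - (b + star b) - c * l - d * star l)
        = y - (star b + b) - star c * star l - star d * l := by
      simp only [star_sub, star_add, star_mul, star_star, hy]; ring
    rwa [e] at h
  have h7 : (c - star d) * l + (d - star c) * star l ∈ I := by
    have e : (c - star d) * l + (d - star c) * star l
        = -((y - (b + star b) - c * l - d * star l)
            - (y - (star b + b) - star c * star l - star d * l)) := by ring
    rw [e]; exact neg_mem (sub_mem h0 h0s)
  have h2ex : star l * (d - star c) ∈ I ⊔ Ideal.span {l} := by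
    refine mem_sup_singleton.mpr ⟨-(c - star d), ?_⟩
    have e : star l * (d - star c) - -(c - star d) * l
        = (c - star d) * l + (d - star c) * star l := by ring
    rw [e]; exact h7
  obtain ⟨e, h2⟩ := mem_sup_singleton.mp (hr2 _ h2ex)
  have h8 : c - star d + e * star l ∈ I := by
    refine hr1 _ ?_
    have he : l * (c - star d + e * star l)
        = ((c - star d) * l + (d - star c) * star l) - (d - star c - e * l) * star l := by ring
    rw [he]; exact sub_mem h7 (Ideal.mul_mem_right _ _ h2)
  have h8s : star c - d + star e * l ∈ I := by
    have h := hSC _ h8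
    have e2 : star (c - star d + e * star l) = star c - d + star e * l := by
      simp only [star_sub, star_add, star_mul, star_star]; ring
    rwa [e2] at h
  have h10 : star e - e ∈ I := by
    refine hr1 _ ?_
    have he : l * (star e - e) = (d - star c - e * l) + (star c - d + star e * l) := by ring
    rw [he]; exact add_mem h2 h8s
  obtain ⟨x, hx, hex⟩ := hS e h10
  have hkey : (y - x * (l * star l)) - ((b + c * l) + star (b + c * l)) ∈ I := by
    have e2 : (y - x * (l * star l)) - ((b + c * l) + star (b + c * l))
        = (y - (b + star b) - c * l - d * star l) + (d - star c - e * l) * star l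
          + (e - x) * (l * star l) := by
      simp only [star_add, star_mul, star_star]; ring
    rw [e2]
    exact add_mem (add_mem h0 (Ideal.mul_mem_right _ _ h2)) (Ideal.mul_mem_right _ _ hex)
  have hsd : star (y - x * (l * star l)) = y - x * (l * star l) := by
    simp only [star_sub, star_mul, star_star, hx, hy]; ring
  exact hSpanMem_snoc.mpr ⟨x, hx, y - x * (l * star l), hInv _ hsd ⟨b + c * l, hkey⟩, by ring⟩

lemma hm_lam {l : A} (hSC : SC I) (hsI : ∀ z ∈ s, z ∈ I) (hr1 : RegMod I l)
    (hr2 : RegMod (I ⊔ Ideal.span {l}) (star l))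
    (hHM : HMinusModZero I) (hS : SurjP I) (hInv : InvP s I)
    (Hstep : ∀ y : A, star y = y → hSpanMem s (y * (l * star l)) → hSpanMem s y) :
    HMinusModZero (I ⊔ Ideal.span {l, star l}) := by
  intro a ha
  obtain ⟨c, d, h1⟩ := mem_sup_pair.mp ha
  have h1s : a + star a - star c * star l - star d * l ∈ I := by
    have h := hSC _ h1
    have e : star (star a + a - c * l - d * star l)
        = a + star a - star c * star l - star d * l := by
      simp only [star_sub, star_add, star_mul, star_star]; ring
    rwa [e] at h
  have h7 : (star d - c) * l + (star c - d) * star l ∈ I := by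
    have e : (star d - c) * l + (star c - d) * star l
        = (star a + a - c * l - d * star l) - (a + star a - star c * star l - star d * l) := by
      ring
    rw [e]; exact sub_mem h1 h1s
  have h2ex : star l * (star c - d) ∈ I ⊔ Ideal.span {l} := by
    refine mem_sup_singleton.mpr ⟨-(star d - c), ?_⟩
    have e : star l * (star c - d) - -(star d - c) * l
        = (star d - c) * l + (star c - d) * star l := by ring
    rw [e]; exact h7
  obtain ⟨e, h2⟩ := mem_sup_singleton.mp (hr2 _ h2ex)
  have h8 : star d - c + e * star l ∈ I := by
    refine hr1 _ ?_
    have he : l * (star d - c + e * star l)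
        = ((star d - c) * l + (star c - d) * star l) - (star c - d - e * l) * star l := by ring
    rw [he]; exact sub_mem h7 (Ideal.mul_mem_right _ _ h2)
  have h8s : d - star c + star e * l ∈ I := by
    have h := hSC _ h8
    have e2 : star (star d - c + e * star l) = d - star c + star e * l := by
      simp only [star_sub, star_add, star_mul, star_star]; ring
    rwa [e2] at h
  have h10 : star e - e ∈ I := by
    refine hr1 _ ?_
    have he : l * (star e - e) = (star c - d - e * l) + (d - star c + star e * l) := by ring
    rw [he]; exact add_mem h2 h8s
  obtain ⟨x, hx, hex⟩ := hS e h10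
  have hK : x * (l * star l) - ((c * l - a) + star (c * l - a)) ∈ I := by
    have e2 : x * (l * star l) - ((c * l - a) + star (c * l - a))
        = (star a + a - c * l - d * star l) + (-(star c - d - e * l)) * star l
          + (-(e - x)) * (l * star l) := by
      simp only [star_sub, star_mul, star_star]; ring
    rw [e2]
    exact add_mem (add_mem h1 (Ideal.mul_mem_right _ _ (neg_mem h2)))
      (Ideal.mul_mem_right _ _ (neg_mem hex))
  have hsd : star (x * (l * star l)) = x * (l * star l) := by
    simp only [star_mul, star_star, hx]; ring
  have hsx := Hstep x hx (hInv _ hsd ⟨c * l - a, hK⟩)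
  obtain ⟨u, hu⟩ := hSpanMem.sub_mem hsI hsx
  have h5 : star (a - (c * l - u * (l * star l))) + (a - (c * l - u * (l * star l))) ∈ I := by
    have e2 : star (a - (c * l - u * (l * star l))) + (a - (c * l - u * (l * star l)))
        = (star a + a - c * l - d * star l) + (-(star c - d - e * l)) * star l
          + (-(e - x)) * (l * star l) + (-(x - (u + star u))) * (l * star l) := by
      simp only [star_sub, star_add, star_mul, star_star]; ring
    rw [e2]
    exact add_mem (add_mem (add_mem h1 (Ideal.mul_mem_right _ _ (neg_mem h2)))
      (Ideal.mul_mem_right _ _ (neg_mem hex))) (Ideal.mul_mem_right _ _ (neg_mem hu))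
  obtain ⟨b, hb⟩ := hHM _ h5
  refine ⟨b, mem_sup_pair.mpr ⟨c - u * star l, 0, ?_⟩⟩
  have e2 : a - (b - star b) - (c - u * star l) * l - 0 * star l
      = (a - (c * l - u * (l * star l))) - (b - star b) := by ring
  rw [e2]; exact hb

lemma hreg_lam {l : A} (hSC : SC I) (hsI : ∀ z ∈ s, z ∈ I) (hr1 : RegMod I l)
    (hr2 : RegMod (I ⊔ Ideal.span {l}) (star l))
    (hInv : InvP s I)
    (hHMnew : HMinusModZero (I ⊔ Ideal.span {l, star l})) :
    ∀ y : A, star y = y → hSpanMem s (y * (l * star l)) → hSpanMem s y := by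
  intro y hy hsm
  obtain ⟨t, ht⟩ := hSpanMem.sub_mem hsI hsm
  have h1 : star t + t ∈ I ⊔ Ideal.span {l, star l} := by
    have e : star t + t = -(y * (l * star l) - (t + star t)) + (y * star l) * l := by ring
    rw [e]
    refine add_mem (Ideal.mem_sup_left (neg_mem ht)) (Ideal.mem_sup_right ?_)
    exact Ideal.mul_mem_left _ _ (Ideal.subset_span (by simp))
  obtain ⟨b, hb⟩ := hHMnew t h1
  obtain ⟨c, d, h2⟩ := mem_sup_pair.mp hb
  have h2s : star t + (b - star b) - star c * star l - star d * l ∈ I := by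
    have h := hSC _ h2
    have e : star (t - (b - star b) - c * l - d * star l)
        = star t + (b - star b) - star c * star l - star d * l := by
      simp only [star_sub, star_mul, star_star]; ring
    rwa [e] at h
  have h5 : y * (l * star l) - (c + star d) * l - (d + star c) * star l ∈ I := by
    have e : y * (l * star l) - (c + star d) * l - (d + star c) * star l
        = (y * (l * star l) - (t + star t)) + (t - (b - star b) - c * l - d * star l)
          + (star t + (b - star b) - star c * star l - star d * l) := by ring
    rw [e]; exact add_mem (add_mem ht h2) h2s
  have h6ex : star l * (d + star c) ∈ I ⊔ Ideal.span {l} := by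
    refine mem_sup_singleton.mpr ⟨y * star l - (c + star d), ?_⟩
    have e : star l * (d + star c) - (y * star l - (c + star d)) * l
        = -(y * (l * star l) - (c + star d) * l - (d + star c) * star l) := by ring
    rw [e]; exact neg_mem h5
  obtain ⟨f, h6⟩ := mem_sup_singleton.mp (hr2 _ h6ex)
  have h6s : star d + c - star f * star l ∈ I := by
    have h := hSC _ h6
    have e : star (d + star c - f * l) = star d + c - star f * star l := by
      simp only [star_sub, star_add, star_mul, star_star]; ring
    rwa [e] at h
  have hfin : l * (star l * (y - (f + star f))) ∈ I := by
    have e : l * (star l * (y - (f + star f)))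
        = (y * (l * star l) - (c + star d) * l - (d + star c) * star l)
          + (star d + c - star f * star l) * l + (d + star c - f * l) * star l := by ring
    rw [e]; exact add_mem (add_mem h5 (Ideal.mul_mem_right _ _ h6s))
      (Ideal.mul_mem_right _ _ h6)
  exact hInv y hy ⟨f, (hr1.star_reg hSC) _ (hr1 _ hfin)⟩

end LamSteps

section Lists

def stepGens : A ⊕ A → List A := Sum.elim (fun m => [m]) (fun l => [l, star l])

def regL (T : List (A ⊕ A)) : List A := (T.map stepGens).flatten

def hL (T : List (A ⊕ A)) : List A := T.map (Sum.elim id (fun l => l * star l))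

def iT (T : List (A ⊕ A)) : Ideal A := Ideal.span {y | y ∈ regL T}

lemma regL_append (T T' : List (A ⊕ A)) : regL (T ++ T') = regL T ++ regL T' := by
  simp [regL]

lemma hL_append (T T' : List (A ⊕ A)) : hL (T ++ T') = hL T ++ hL T' := by
  simp [hL]

lemma hL_length (T : List (A ⊕ A)) : (hL T).length = T.length := by simp [hL]

lemma regL_inl (m : A) : regL [Sum.inl m] = [m] := rfl
lemma regL_inr (l : A) : regL [Sum.inr l] = [l, star l] := rfl
lemma hL_inl (m : A) : hL [Sum.inl m] = [m] := rfl
lemma hL_inr (l : A) : hL [Sum.inr l] = [l * star l] := rfl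

lemma set_append_singleton (R : List A) (a : A) :
    {y | y ∈ R ++ [a]} = {y | y ∈ R} ∪ {a} := by
  ext x; simp [List.mem_append]; tauto

lemma set_append_pair (R : List A) (a b : A) :
    {y | y ∈ R ++ [a, b]} = {y | y ∈ R} ∪ {a, b} := by
  ext x; simp [List.mem_append]; tauto

lemma iT_snoc_inl (T : List (A ⊕ A)) (m : A) :
    iT (T ++ [Sum.inl m]) = iT T ⊔ Ideal.span {m} := by
  rw [iT, regL_append, regL_inl, set_append_singleton, Ideal.span_union]; rfl

lemma iT_snoc_inr (T : List (A ⊕ A)) (l : A) :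
    iT (T ++ [Sum.inr l]) = iT T ⊔ Ideal.span {l, star l} := by
  rw [iT, regL_append, regL_inr, set_append_pair, Ideal.span_union]; rfl

lemma sc_iT (T : List (A ⊕ A)) (hSD : ∀ m : A, Sum.inl m ∈ T → star m = m) :
    SC (iT T) := by
  intro x hx
  refine Submodule.span_induction (p := fun x _ => star x ∈ iT T) ?_ ?_ ?_ ?_ hx
  · intro y hy
    simp only [Set.mem_setOf_eq, regL, List.mem_flatten, List.mem_map] at hy
    obtain ⟨L, ⟨st, hst, rfl⟩, hyL⟩ := hy
    apply Ideal.subset_span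
    rcases st with m | lm
    · simp only [stepGens, Sum.elim_inl, List.mem_singleton] at hyL
      rw [hyL, hSD m hst]
      simp only [Set.mem_setOf_eq, regL, List.mem_flatten, List.mem_map]
      exact ⟨[m], ⟨Sum.inl m, hst, rfl⟩, by simp⟩
    · simp only [stepGens, Sum.elim_inr] at hyL
      simp only [Set.mem_setOf_eq, regL, List.mem_flatten, List.mem_map]
      refine ⟨[lm, star lm], ⟨Sum.inr lm, hst, rfl⟩, ?_⟩
      rcases List.mem_pair.mp hyL with rfl | rfl
      · simp
      · simp
  · simp
  · intro a b _ _ ha hb; rw [star_add]; exact add_mem ha hb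
  · intro a b _ hb
    rw [smul_eq_mul, star_mul]
    exact Ideal.mul_mem_right _ _ hb

lemma hsI_iT (T : List (A ⊕ A)) : ∀ z ∈ hL T, z ∈ iT T := by
  intro z hz
  simp only [hL, List.mem_map] at hz
  obtain ⟨st, hst, rfl⟩ := hz
  rcases st with m | lm
  · apply Ideal.subset_span
    simp only [Sum.elim_inl, id_eq, Set.mem_setOf_eq, regL, List.mem_flatten, List.mem_map]
    exact ⟨[m], ⟨Sum.inl m, hst, rfl⟩, by simp⟩
  · simp only [Sum.elim_inr]
    refine Ideal.mul_mem_left _ _ (Ideal.subset_span ?_)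
    simp only [Set.mem_setOf_eq, regL, List.mem_flatten, List.mem_map]
    exact ⟨[lm, star lm], ⟨Sum.inr lm, hst, rfl⟩, by simp⟩

lemma isRegularSeq_prefix {R R' : List A} (h : IsRegularSeq (R ++ R')) : IsRegularSeq R := by
  intro i hi x hx
  have hi' : i < (R ++ R').length := by simp; omega
  have hg : (R ++ R').get ⟨i, hi'⟩ = R.get ⟨i, hi⟩ := by
    simp [List.getElem_append_left hi]
  have htk : (R ++ R').take i = R.take i := List.take_append_of_le_length (le_of_lt hi)
  have := h i hi' x (by rw [hg, htk]; exact hx)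
  rwa [htk] at this

lemma isHPlus_prefix {R R' : List A} (h : IsHPlusRegularSeq (R ++ R')) :
    IsHPlusRegularSeq R := by
  intro i hi y hy hsm
  have hi' : i < (R ++ R').length := by simp; omega
  have hg : (R ++ R').get ⟨i, hi'⟩ = R.get ⟨i, hi⟩ := by
    simp [List.getElem_append_left hi]
  have htk : (R ++ R').take i = R.take i := List.take_append_of_le_length (le_of_lt hi)
  have := h i hi' y hy (by rw [hg, htk]; exact hsm)
  rwa [htk] at this

lemma reg_extract_mu {R : List A} {m : A} (h : IsRegularSeq (R ++ [m])) :
    RegMod (Ideal.span {y | y ∈ R}) m := by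
  intro x hx
  have hi : R.length < (R ++ [m]).length := by simp
  have hg : (R ++ [m]).get ⟨R.length, hi⟩ = m := by simp
  have htk : (R ++ [m]).take R.length = R := by
    rw [List.take_append_of_le_length (le_refl _), List.take_length]
  have := h R.length hi x (by rw [hg, htk]; exact hx)
  rwa [htk] at this

lemma reg_extract_lam1 {R : List A} {l l' : A} (h : IsRegularSeq (R ++ [l, l'])) :
    RegMod (Ideal.span {y | y ∈ R}) l := by
  intro x hx
  have hi : R.length < (R ++ [l, l']).length := by simp
  have hg : (R ++ [l, l']).get ⟨R.length, hi⟩ = l := by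
    simp [List.getElem_append_right (le_refl R.length)]
  have htk : (R ++ [l, l']).take R.length = R := by
    rw [List.take_append_of_le_length (le_refl _), List.take_length]
  have := h R.length hi x (by rw [hg, htk]; exact hx)
  rwa [htk] at this

lemma reg_extract_lam2 {R : List A} {l l' : A} (h : IsRegularSeq (R ++ [l, l'])) :
    RegMod (Ideal.span {y | y ∈ R} ⊔ Ideal.span {l}) l' := by
  have hsp : Ideal.span {y | y ∈ R ++ [l]} = Ideal.span {y | y ∈ R} ⊔ Ideal.span {l} := by
    rw [set_append_singleton, Ideal.span_union]
  intro x hx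
  have hi : R.length + 1 < (R ++ [l, l']).length := by simp
  have hg : (R ++ [l, l']).get ⟨R.length + 1, hi⟩ = l' := by
    simp [List.getElem_append_right (by omega : R.length ≤ R.length + 1)]
  have htk : (R ++ [l, l']).take (R.length + 1) = R ++ [l] := by
    have h2 : R ++ [l, l'] = (R ++ [l]) ++ [l'] := by simp
    rw [h2, show R.length + 1 = (R ++ [l]).length from by simp, List.take_left]
  have := h (R.length + 1) hi x (by rw [hg, htk, hsp]; exact hx)
  rw [htk, hsp] at this
  exact this

end Lists

section Main

def HMall (T : List (A ⊕ A)) : Prop :=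
  ∀ k, k ≤ T.length → HMinusModZero (iT (T.take k))

lemma HMall_top {T : List (A ⊕ A)} (h : HMall T) : HMinusModZero (iT T) := by
  have := h T.length (le_refl _); rwa [List.take_length] at this

lemma HMall_restrict {T : List (A ⊕ A)} {st : A ⊕ A} (h : HMall (T ++ [st])) : HMall T := by
  intro k hk
  have := h k (by simp; omega)
  rwa [List.take_append_of_le_length hk] at this

lemma HMall_snoc {T : List (A ⊕ A)} {st : A ⊕ A} (h : HMall T)
    (hnew : HMinusModZero (iT (T ++ [st]))) : HMall (T ++ [st]) := by
  intro k hk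
  simp only [List.length_append, List.length_singleton] at hk
  rcases Nat.lt_or_ge k (T.length + 1) with hlt | hge
  · have hk' : k ≤ T.length := by omega
    rw [List.take_append_of_le_length hk']
    exact h k hk'
  · have : (T ++ [st]).take k = T ++ [st] := List.take_of_length_le (by simp; omega)
    rw [this]; exact hnew

lemma isHPlus_snoc {R : List A} {h : A}
    (hR : IsHPlusRegularSeq R)
    (hstep : ∀ y : A, star y = y → hSpanMem R (y * h) → hSpanMem R y) :
    IsHPlusRegularSeq (R ++ [h]) := by
  intro i hi y hy hsm
  have hlen : (R ++ [h]).length = R.length + 1 := by simp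
  rcases Nat.lt_or_ge i R.length with hlt | hge
  · have htk : (R ++ [h]).take i = R.take i := List.take_append_of_le_length (le_of_lt hlt)
    have hg : (R ++ [h]).get ⟨i, hi⟩ = R.get ⟨i, hlt⟩ := by
      simp [List.getElem_append_left hlt]
    rw [htk, hg] at hsm
    rw [htk]
    exact hR i hlt y hy hsm
  · have hie : i = R.length := by rw [hlen] at hi; omega
    subst hie
    have htk : (R ++ [h]).take R.length = R := by
      rw [List.take_append_of_le_length (le_refl _), List.take_length]
    have hg : (R ++ [h]).get ⟨R.length, hi⟩ = h := by simp
    rw [htk, hg] at hsm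
    rw [htk]
    exact hstep y hy hsm

lemma isHPlus_snoc_step {R : List A} {h : A} (hRh : IsHPlusRegularSeq (R ++ [h])) :
    ∀ y : A, star y = y → hSpanMem R (y * h) → hSpanMem R y := by
  intro y hy hsm
  have hi : R.length < (R ++ [h]).length := by simp
  have htk : (R ++ [h]).take R.length = R := by
    rw [List.take_append_of_le_length (le_refl _), List.take_length]
  have hg : (R ++ [h]).get ⟨R.length, hi⟩ = h := by simp
  have := hRh R.length hi y hy (by rw [htk, hg]; exact hsm)
  rwa [htk] at this

lemma iT_nil : iT ([] : List (A ⊕ A)) = ⊥ := by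
  have : {y : A | y ∈ regL ([] : List (A ⊕ A))} = (∅ : Set A) := by simp [regL]
  rw [iT, this, Ideal.span_empty]

theorem main (hA : HMinusModZero (⊥ : Ideal A)) (T : List (A ⊕ A))
    (hSD : ∀ m : A, Sum.inl m ∈ T → star m = m) (hreg : IsRegularSeq (regL T)) :
    (HMall T → SurjP (iT T) ∧ InvP (hL T) (iT T) ∧ IsHPlusRegularSeq (hL T))
      ∧ (IsHPlusRegularSeq (hL T) → HMall T) := by
  induction T using List.reverseRecOn with
  | nil =>
    constructor
    · intro _
      refine ⟨?_, ?_, ?_⟩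
      · intro a ha
        rw [iT_nil, Ideal.mem_bot, sub_eq_zero] at ha
        exact ⟨a, ha.symm ▸ ha, by rw [iT_nil]; simp⟩
      · rintro y hy ⟨b, hb⟩
        rw [iT_nil, Ideal.mem_bot, sub_eq_zero] at hb
        exact hSpanMem_nil.mpr ⟨b, hb⟩
      · intro i hi
        simp [hL] at hi
    · intro _ k hk
      simp only [List.length_nil, Nat.le_zero] at hk
      subst hk
      simpa [iT_nil] using hA
  | append_singleton T st ih =>
    have hSD' : ∀ m : A, Sum.inl m ∈ T → star m = m := fun m hm => hSD m (by simp [hm])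
    have hregT : IsRegularSeq (regL T) := by
      rw [regL_append] at hreg; exact isRegularSeq_prefix hreg
    obtain ⟨ih1, ih2⟩ := ih hSD' hregT
    have hSC : SC (iT T) := sc_iT T hSD'
    have hsI := hsI_iT T
    rcases st with m | lm
    · -- self-dual μ step
      have hmsd : star m = m := hSD m (by simp)
      have hrm : RegMod (iT T) m := by
        rw [regL_append, regL_inl] at hreg
        exact reg_extract_mu hreg
      constructor
      · intro hm
        have hmT := HMall_restrict hm
        obtain ⟨hS, hInv, hHp⟩ := ih1 hmT
        have hHM : HMinusModZero (iT T) := HMall_top hmT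
        have hHMnew : HMinusModZero (iT T ⊔ Ideal.span {m}) := by
          rw [← iT_snoc_inl]; exact HMall_top hm
        refine ⟨?_, ?_, ?_⟩
        · rw [iT_snoc_inl]; exact surj_mu hSC hmsd hrm hHM hS
        · rw [iT_snoc_inl, hL_append, hL_inl]
          exact inv_mu hSC hmsd hrm hS hInv
        · rw [hL_append, hL_inl]
          exact isHPlus_snoc hHp (hreg_mu hSC hsI hmsd hrm hInv hHMnew)
      · intro hHp'
        rw [hL_append, hL_inl] at hHp'
        have hmT := ih2 (isHPlus_prefix hHp')
        obtain ⟨hS, hInv, _⟩ := ih1 hmT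
        have hHM : HMinusModZero (iT T) := HMall_top hmT
        refine HMall_snoc hmT ?_
        rw [iT_snoc_inl]
        exact hm_mu hSC hsI hmsd hrm hHM hS hInv (isHPlus_snoc_step hHp')
    · -- λ, λ* step
      have hr1 : RegMod (iT T) lm := by
        rw [regL_append, regL_inr] at hreg
        exact reg_extract_lam1 hreg
      have hr2 : RegMod (iT T ⊔ Ideal.span {lm}) (star lm) := by
        rw [regL_append, regL_inr] at hreg
        exact reg_extract_lam2 hreg
      constructor
      · intro hm
        have hmT := HMall_restrict hm
        obtain ⟨hS, hInv, hHp⟩ := ih1 hmT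
        have hHM : HMinusModZero (iT T) := HMall_top hmT
        have hHMnew : HMinusModZero (iT T ⊔ Ideal.span {lm, star lm}) := by
          rw [← iT_snoc_inr]; exact HMall_top hm
        refine ⟨?_, ?_, ?_⟩
        · rw [iT_snoc_inr]; exact surj_lam hSC hr1 hr2 hHM hS
        · rw [iT_snoc_inr, hL_append, hL_inr]
          exact inv_lam hSC hr1 hr2 hS hInv
        · rw [hL_append, hL_inr]
          exact isHPlus_snoc hHp (hreg_lam hSC hsI hr1 hr2 hInv hHMnew)
      · intro hHp'
        rw [hL_append, hL_inr] at hHp'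
        have hmT := ih2 (isHPlus_prefix hHp')
        obtain ⟨hS, hInv, _⟩ := ih1 hmT
        have hHM : HMinusModZero (iT T) := HMall_top hmT
        refine HMall_snoc hmT ?_
        rw [iT_snoc_inr]
        exact hm_lam hSC hsI hr1 hr2 hHM hS hInv (isHPlus_snoc_step hHp')

end Main

section Inst

lemma regL_cons (x : A ⊕ A) (T : List (A ⊕ A)) : regL (x :: T) = stepGens x ++ regL T := rfl

lemma regL_map_inl (R : List A) : regL (R.map Sum.inl) = R := by
  induction R with
  | nil => rfl
  | cons a R ih => simp only [List.map_cons, regL_cons, ih]; rfl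

lemma mem_regL_map_inr (R : List A) (y : A) :
    y ∈ regL (R.map Sum.inr) ↔ ∃ l ∈ R, y = l ∨ y = star l := by
  induction R with
  | nil => simp [regL]
  | cons a R ih =>
    simp only [List.map_cons, regL_cons]
    simp only [stepGens, Sum.elim_inr, List.mem_append, ih, List.mem_cons]
    constructor
    · rintro (h | ⟨l, hl, h⟩)
      · exact ⟨a, Or.inl rfl, by simpa using h⟩
      · exact ⟨l, Or.inr hl, h⟩
    · rintro ⟨l, (rfl | hl), h⟩
      · exact Or.inl (by simpa using h)
      · exact Or.inr ⟨l, hl, h⟩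

lemma mem_take_ofFn {n : ℕ} (f : Fin n → A) (k : ℕ) (y : A) :
    y ∈ (List.ofFn f).take k ↔ ∃ i : Fin n, (i : ℕ) < k ∧ y = f i := by
  constructor
  · intro h
    obtain ⟨j, hj, he⟩ := List.mem_iff_getElem.mp h
    have hj' : j < min k n := by simpa using hj
    refine ⟨⟨j, by omega⟩, by simp; omega, ?_⟩
    rw [← he, List.getElem_take, List.getElem_ofFn]
  · rintro ⟨i, hik, rfl⟩
    refine List.mem_iff_getElem.mpr ⟨i, by simp; omega, ?_⟩
    rw [List.getElem_take, List.getElem_ofFn]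

lemma set_mem_append (L1 L2 : List A) :
    {y : A | y ∈ L1 ++ L2} = {y | y ∈ L1} ∪ {y | y ∈ L2} := by
  ext x; simp [List.mem_append]

end Inst

end Cor

open Cor

/-- Corollary 1.6: Let `A` be a ∗-ring with `h⁻(A) = 0`, `μ₁, …, μₙ` self-dual and
`λ₁, …, λ_m` such that `μ₁, …, μₙ, λ₁, λ₁∗, …, λ_m, λ_m∗` is an `A`-regular sequence.
Then (1) `[μ₁], …, [μₙ], [λ₁λ₁∗], …, [λ_mλ_m∗]` is a regular sequence in `h⁺(A)` iff
(2) `h⁻(A/(μ₁,…,μ_k)) = 0` for all `1 ≤ k ≤ n` and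
`h⁻(A/(μ₁,…,μₙ,λ₁,λ₁∗,…,λ_j,λ_j∗)) = 0` for all `1 ≤ j ≤ m`; and if these hold then
`h⁻` of the full quotient vanishes and the canonical map
`h⁺(A)/([μ₁],…,[μₙ],[λ₁λ₁∗],…,[λ_mλ_m∗]) → h⁺(A/(μ₁,…,μₙ,λ₁,λ₁∗,…,λ_m,λ_m∗))` is an
isomorphism (expressed by surjectivity and injectivity). -/
theorem stmt_2 {A : Type*} [CommRing A] [StarRing A]
    (hA : ∀ a : A, star a = -a → ∃ b : A, a = b - star b)
    (nn mm : ℕ) (μ : Fin nn → A) (lam : Fin mm → A)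
    (hμ : ∀ i, star (μ i) = μ i)
    (hreg : IsRegularSeq
      (List.ofFn μ ++ (List.ofFn fun j : Fin mm => [lam j, star (lam j)]).flatten)) :
    (IsHPlusRegularSeq
        (List.ofFn μ ++ List.ofFn fun j : Fin mm => lam j * star (lam j)) ↔
      ((∀ k : ℕ, 1 ≤ k → k ≤ nn →
          HMinusModZero (Ideal.span {a : A | ∃ i : Fin nn, (i : ℕ) < k ∧ a = μ i})) ∧
        (∀ j : ℕ, 1 ≤ j → j ≤ mm →
          HMinusModZero (Ideal.span
            ({a : A | ∃ i : Fin nn, a = μ i} ∪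
              {a : A | ∃ i : Fin mm, (i : ℕ) < j ∧ (a = lam i ∨ a = star (lam i))}))))) ∧
    (IsHPlusRegularSeq
        (List.ofFn μ ++ List.ofFn fun j : Fin mm => lam j * star (lam j)) →
      (HMinusModZero (Ideal.span
          ({a : A | ∃ i : Fin nn, a = μ i} ∪
            {a : A | ∃ i : Fin mm, a = lam i ∨ a = star (lam i)})) ∧
        (∀ a : A,
          star a - a ∈ Ideal.span
            ({a : A | ∃ i : Fin nn, a = μ i} ∪
              {a : A | ∃ i : Fin mm, a = lam i ∨ a = star (lam i)}) →
          ∃ x : A, star x = x ∧ ∃ b : A,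
            a - x - (b + star b) ∈ Ideal.span
              ({a : A | ∃ i : Fin nn, a = μ i} ∪
                {a : A | ∃ i : Fin mm, a = lam i ∨ a = star (lam i)})) ∧
        (∀ x : A, star x = x →
          (∃ b : A, x - (b + star b) ∈ Ideal.span
            ({a : A | ∃ i : Fin nn, a = μ i} ∪
              {a : A | ∃ i : Fin mm, a = lam i ∨ a = star (lam i)})) →
          hSpanMem (List.ofFn μ ++ List.ofFn fun j : Fin mm => lam j * star (lam j)) x))) := by
  classical
  set T₀ : List (A ⊕ A) := (List.ofFn μ).map Sum.inl ++ (List.ofFn lam).map Sum.inr with hT₀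
  have hA' : HMinusModZero (⊥ : Ideal A) := by
    intro a ha
    rw [Ideal.mem_bot] at ha
    obtain ⟨b, hb⟩ := hA a (eq_neg_of_add_eq_zero_left ha)
    exact ⟨b, by rw [Ideal.mem_bot, sub_eq_zero]; exact hb⟩
  have hSD0 : ∀ m : A, Sum.inl m ∈ T₀ → star m = m := by
    intro m hm
    simp only [hT₀, List.mem_append, List.mem_map] at hm
    rcases hm with ⟨x, hx, he⟩ | ⟨x, hx, he⟩
    · injection he with he'
      subst he'
      obtain ⟨i, hi⟩ := List.mem_ofFn.mp hx
      rw [← hi]; exact hμ i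
    · exact absurd he (by simp)
  have B1 : regL T₀ = List.ofFn μ ++ (List.ofFn fun j : Fin mm => [lam j, star (lam j)]).flatten := by
    rw [hT₀, regL_append, regL_map_inl]
    congr 1
    simp only [regL, List.map_map]
    rw [List.map_ofFn]
    rfl
  have B2 : hL T₀ = List.ofFn μ ++ List.ofFn fun j : Fin mm => lam j * star (lam j) := by
    simp only [hT₀, hL, List.map_append, List.map_map]
    rw [List.map_ofFn, List.map_ofFn]
    rfl
  have hlenT : T₀.length = nn + mm := by simp [hT₀]
  have hreg' : IsRegularSeq (regL T₀) := by rw [B1]; exact hreg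
  have hmain := main hA' T₀ hSD0 hreg'
  have set1eq : {y : A | y ∈ List.ofFn μ} = {a : A | ∃ i : Fin nn, a = μ i} := by
    ext a
    simp only [Set.mem_setOf_eq, List.mem_ofFn, Set.mem_range]
    exact ⟨fun ⟨i, h⟩ => ⟨i, h.symm⟩, fun ⟨i, h⟩ => ⟨i, h.symm⟩⟩
  have set2eq : ∀ j : ℕ, {y : A | y ∈ regL (((List.ofFn lam).take j).map Sum.inr)}
      = {a : A | ∃ i : Fin mm, (i : ℕ) < j ∧ (a = lam i ∨ a = star (lam i))} := by
    intro j
    ext a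
    rw [Set.mem_setOf_eq, mem_regL_map_inr]
    constructor
    · rintro ⟨l, hl, h⟩
      obtain ⟨i, hij, rfl⟩ := (mem_take_ofFn lam j l).mp hl
      exact ⟨i, hij, h⟩
    · rintro ⟨i, hij, h⟩
      exact ⟨lam i, (mem_take_ofFn lam j (lam i)).mpr ⟨i, hij, rfl⟩, h⟩
  have hIk : ∀ k, k ≤ nn →
      iT (T₀.take k) = Ideal.span {a : A | ∃ i : Fin nn, (i : ℕ) < k ∧ a = μ i} := by
    intro k hk
    have htk : T₀.take k = ((List.ofFn μ).take k).map Sum.inl := by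
      rw [hT₀, List.take_append_of_le_length (by simp; omega), List.map_take]
    rw [iT, htk, regL_map_inl]
    congr 1
    exact Set.ext fun a => mem_take_ofFn μ k a
  have hIj : ∀ j, j ≤ mm →
      iT (T₀.take (nn + j)) = Ideal.span
        ({a : A | ∃ i : Fin nn, a = μ i} ∪
          {a : A | ∃ i : Fin mm, (i : ℕ) < j ∧ (a = lam i ∨ a = star (lam i))}) := by
    intro j hj
    have hlen1 : ((List.ofFn μ).map (Sum.inl : A → A ⊕ A)).length = nn := by simp
    have htk : T₀.take (nn + j)
        = (List.ofFn μ).map Sum.inl ++ ((List.ofFn lam).take j).map Sum.inr := by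
      rw [hT₀, show nn + j = ((List.ofFn μ).map (Sum.inl : A → A ⊕ A)).length + j from by rw [hlen1],
        List.take_length_add_append, List.map_take]
    rw [iT, htk, regL_append, regL_map_inl, set_mem_append, set1eq, set2eq]
  have hfull : Ideal.span
      ({a : A | ∃ i : Fin nn, a = μ i} ∪
        {a : A | ∃ i : Fin mm, a = lam i ∨ a = star (lam i)}) = iT T₀ := by
    have h1 : {a : A | ∃ i : Fin mm, a = lam i ∨ a = star (lam i)}
        = {a : A | ∃ i : Fin mm, (i : ℕ) < mm ∧ (a = lam i ∨ a = star (lam i))} := by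
      ext a
      exact ⟨fun ⟨i, h⟩ => ⟨i, i.isLt, h⟩, fun ⟨i, _, h⟩ => ⟨i, h⟩⟩
    rw [h1, ← hIj mm le_rfl, List.take_of_length_le (by rw [hlenT])]
  have hmEquiv : HMall T₀ ↔
      ((∀ k : ℕ, 1 ≤ k → k ≤ nn →
          HMinusModZero (Ideal.span {a : A | ∃ i : Fin nn, (i : ℕ) < k ∧ a = μ i})) ∧
        (∀ j : ℕ, 1 ≤ j → j ≤ mm →
          HMinusModZero (Ideal.span
            ({a : A | ∃ i : Fin nn, a = μ i} ∪
              {a : A | ∃ i : Fin mm, (i : ℕ) < j ∧ (a = lam i ∨ a = star (lam i))})))) := by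
    constructor
    · intro hm
      constructor
      · intro k _ hk2
        rw [← hIk k hk2]
        exact hm k (by rw [hlenT]; omega)
      · intro j _ hj2
        rw [← hIj j hj2]
        exact hm (nn + j) (by rw [hlenT]; omega)
    · rintro ⟨c1, c2⟩ k hk
      rw [hlenT] at hk
      rcases Nat.lt_or_ge k 1 with h0 | h1
      · have hk0 : k = 0 := by omega
        subst hk0
        simpa [List.take_zero, iT_nil] using hA'
      · rcases le_or_gt k nn with hkn | hkn
        · rw [hIk k hkn]
          exact c1 k h1 hkn
        · have hke : k = nn + (k - nn) := by omega
          rw [hke, hIj (k - nn) (by omega)]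
          exact c2 (k - nn) (by omega) (by omega)
  constructor
  · rw [← B2]
    constructor
    · intro h
      exact hmEquiv.mp (hmain.2 h)
    · intro h
      exact (hmain.1 (hmEquiv.mpr h)).2.2
  · rw [← B2]
    intro hHp
    have hm := hmain.2 hHp
    obtain ⟨hS, hInv, _⟩ := hmain.1 hm
    refine ⟨?_, ?_, ?_⟩
    · rw [hfull]
      exact HMall_top hm
    · intro a ha
      rw [hfull] at ha ⊢
      obtain ⟨x, hx, hax⟩ := hS a ha
      exact ⟨x, hx, 0, by simpa using hax⟩
    · intro x hx hb
      rw [hfull] at hb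
      exact hInv x hx hb
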